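/- Let X^n be i.i.d. Bernoulli(p) with p in (0,1). Let f: F_2^n → F_2^k be an arbitrary encoder and g: F_2^k → F_2^n an F_2-linear decoder (not necessarily local) with P[g(f(X^n)) ≠ X^n] ≤ ε. Then k ≥ n − log(1−ε)/log(max{p,1−p}). -/

import Mathlib

open scoped Classical BigOperators
open Filter

noncomputable section

/-- Hamming weight of a binary vector. -/
def hw {n : ℕ} (x : Fin n → ZMod 2) : ℕ :=
  (Finset.univ.filter fun i => x i ≠ 0).card

/-- Probability mass of a vector under the product Bernoulli(p) measure. -/
def pmass (p : ℝ) {n : ℕ} (x : Fin n → ZMod 2) : ℝ :=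
  p ^ hw x * (1 - p) ^ (n - hw x)

/-- Probability of a set under the product Bernoulli(p) measure. -/
def pmeas (p : ℝ) {n : ℕ} (S : Set (Fin n → ZMod 2)) : ℝ :=
  ∑ x : Fin n → ZMod 2, if x ∈ S then pmass p x else 0

/-- A decoder is `t`-local if each output coordinate depends on at most `t`
input coordinates. -/
def IsLocal {k n : ℕ} (g : (Fin k → ZMod 2) → (Fin n → ZMod 2)) (t : ℕ) : Prop :=
  ∀ a : Fin n, ∃ N : Finset (Fin k), N.card ≤ t ∧
    ∀ y y' : Fin k → ZMod 2, (∀ j ∈ N, y j = y' j) → g y a = g y' a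

lemma pmass_eq_prod (p : ℝ) {n : ℕ} (x : Fin n → ZMod 2) :
    pmass p x = ∏ i : Fin n, (if x i = 0 then 1 - p else p) := by
  classical
  rw [Finset.prod_ite]
  simp only [Finset.prod_const]
  have h := Finset.card_filter_add_card_filter_not (s := (Finset.univ : Finset (Fin n)))
    (p := fun i => x i = 0)
  simp only [Finset.card_univ, Fintype.card_fin] at h
  have h2 : (Finset.univ.filter fun i => ¬ x i = 0) = (Finset.univ.filter fun i => x i ≠ 0) := rfl
  rw [h2] at h
  have hhw : (Finset.univ.filter fun i => x i ≠ 0).card = hw x := rfl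
  rw [hhw] at h
  have : (Finset.univ.filter fun i => x i = 0).card = n - hw x := by omega
  rw [this, pmass, mul_comm]
  rfl

lemma sum_prod_w (p : ℝ) (ι : Type*) [Fintype ι] [DecidableEq ι] :
    ∑ y : ι → ZMod 2, ∏ i, (if y i = 0 then 1 - p else p) = 1 := by
  rw [← Fintype.piFinset_univ,
    ← Finset.prod_univ_sum (t := fun _ : ι => (Finset.univ : Finset (ZMod 2)))
      (f := fun _ b => if b = 0 then 1 - p else p)]
  have : ∑ b : ZMod 2, (if b = 0 then 1 - p else p) = 1 := by
    rw [show (Finset.univ : Finset (ZMod 2)) = {0, 1} by decide]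
    norm_num
  simp [this]

set_option maxHeartbeats 1000000 in
lemma key {n : ℕ} (p : ℝ) (hp0 : 0 ≤ p) (hp1 : p ≤ 1)
    (V : Submodule (ZMod 2) (Fin n → ZMod 2)) :
    ∑ x : Fin n → ZMod 2, (if x ∈ V then pmass p x else 0)
      ≤ (max p (1 - p)) ^ (n - Module.finrank (ZMod 2) V) := by
  classical
  set q := max p (1 - p) with hqdef
  set w : ZMod 2 → ℝ := fun b => if b = 0 then 1 - p else p with hwdef
  have hq0 : (0:ℝ) ≤ q := le_max_of_le_left hp0
  have hwle : ∀ b, w b ≤ q := by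
    intro b
    show (if b = 0 then 1 - p else p) ≤ q
    split
    · exact le_max_right _ _
    · exact le_max_left _ _
  have hw0 : ∀ b, 0 ≤ w b := by
    intro b
    show (0:ℝ) ≤ (if b = 0 then 1 - p else p)
    split
    · linarith
    · exact hp0
  -- choose a linearly independent spanning set for V
  obtain ⟨s, hsV, hspan_s, hs_li⟩ := exists_linearIndependent (ZMod 2) (V : Set (Fin n → ZMod 2))
  have hspanV : Submodule.span (ZMod 2) s = V := by rw [hspan_s, Submodule.span_eq]
  -- extend it to a basis of the whole space using standard basis vectors
  set e : Fin n → (Fin n → ZMod 2) := fun i => Pi.single i 1 with he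
  obtain ⟨b, hb_sub, hsb, hb_span, hb_li⟩ :=
    exists_linearIndepOn_id_extension hs_li (Set.subset_union_left (t := Set.range e))
  replace hb_li : LinearIndependent (ZMod 2) ((↑) : b → (Fin n → ZMod 2)) := hb_li
  have hrange_span : Submodule.span (ZMod 2) (Set.range e) = ⊤ := by
    have h := (Pi.basisFun (ZMod 2) (Fin n)).span_eq
    have hfe : ⇑(Pi.basisFun (ZMod 2) (Fin n)) = e := by
      funext i; simp [he]
    rwa [hfe] at h
  have hspan_top : Submodule.span (ZMod 2) b = ⊤ := by
    rw [eq_top_iff, ← hrange_span]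
    exact Submodule.span_le.mpr fun x hx => hb_span (Or.inr hx)
  -- finiteness and cardinalities
  have hbfin : b.Finite := hb_li.setFinite
  have hsfin : s.Finite := hs_li.setFinite
  letI := hbfin.fintype
  letI := hsfin.fintype
  have hcard_b : b.toFinset.card = n := by
    have h := finrank_span_set_eq_card hb_li
    rw [hspan_top, finrank_top, Module.finrank_fin_fun] at h
    exact h.symm
  have hcard_s : s.toFinset.card = Module.finrank (ZMod 2) V := by
    have h := finrank_span_set_eq_card hs_li
    rw [hspanV] at h
    exact h.symm
  -- the coordinate set J
  set J : Finset (Fin n) := Finset.univ.filter (fun j => e j ∈ b \ s) with hJdef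
  have he_inj : Function.Injective e := by
    intro i j hij
    by_contra hne
    have h1 : e i i = 1 := by simp [he]
    have h2 : e j i = 0 := by simp [he, Pi.single_apply, Ne.symm hne]
    rw [hij] at h1
    rw [h1] at h2
    exact one_ne_zero h2
  have hsub_bF : s.toFinset ⊆ b.toFinset := by
    intro z hz
    rw [Set.mem_toFinset] at hz ⊢
    exact hsb hz
  have himg : J.image e = b.toFinset \ s.toFinset := by
    ext z
    simp only [Finset.mem_image, Finset.mem_sdiff, Set.mem_toFinset, hJdef,
      Finset.mem_filter, Finset.mem_univ, true_and]
    constructor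
    · rintro ⟨j, hj, rfl⟩
      exact ⟨hj.1, hj.2⟩
    · rintro ⟨hzb, hzs⟩
      have : z ∈ s ∪ Set.range e := hb_sub hzb
      rcases this with h | ⟨j, rfl⟩
      · exact absurd h hzs
      · exact ⟨j, ⟨hzb, hzs⟩, rfl⟩
  have hJcard : J.card = n - Module.finrank (ZMod 2) V := by
    have h1 : (J.image e).card = J.card := Finset.card_image_of_injective _ he_inj
    rw [himg, Finset.card_sdiff_of_subset hsub_bF, hcard_b, hcard_s] at h1
    exact h1.symm
  -- vectors supported in J lie in span (b \ s)
  have hsupp : ∀ x : Fin n → ZMod 2, (∀ i, i ∉ J → x i = 0) →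
      x ∈ Submodule.span (ZMod 2) (b \ s) := by
    intro x hx
    rw [← Finset.univ_sum_single x]
    apply Submodule.sum_mem
    intro i _
    by_cases hi : i ∈ J
    · have hmem : e i ∈ b \ s := by
        rw [hJdef] at hi
        simpa using hi
      have : Pi.single i (x i) = x i • e i := by
        funext j
        by_cases hj : j = i
        · subst hj; simp [he]
        · simp [he, Pi.single_apply, hj]
      rw [this]
      exact Submodule.smul_mem _ _ (Submodule.subset_span hmem)
    · rw [hx i hi]
      simp
  -- disjointness of V and span (b \ s)
  have hdisj : Disjoint V (Submodule.span (ZMod 2) (b \ s)) := by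
    have h := hb_li.disjoint_span_image (s := {x : b | (x : Fin n → ZMod 2) ∈ s})
      (t := {x : b | (x : Fin n → ZMod 2) ∉ s}) (by
        rw [Set.disjoint_iff]
        rintro x ⟨h1, h2⟩
        exact h2 h1)
    have h1 : (Subtype.val '' {x : b | (x : Fin n → ZMod 2) ∈ s}) = s := by
      ext z
      constructor
      · rintro ⟨⟨z', hz'⟩, hz2, rfl⟩
        exact hz2
      · intro hz
        exact ⟨⟨z, hsb hz⟩, hz, rfl⟩
    have h2 : (Subtype.val '' {x : b | (x : Fin n → ZMod 2) ∉ s}) = b \ s := by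
      ext z
      constructor
      · rintro ⟨⟨z', hz'⟩, hz2, rfl⟩
        exact ⟨hz', hz2⟩
      · rintro ⟨hzb, hzs⟩
        exact ⟨⟨z, hzb⟩, hzs, rfl⟩
    rw [h1, h2] at h
    rwa [hspanV] at h
  -- injectivity of restriction to Jᶜ on V
  have hinj : ∀ x ∈ V, ∀ y ∈ V, (∀ i, i ∉ J → x i = y i) → x = y := by
    intro x hx y hy hxy
    have hd : x - y ∈ V := Submodule.sub_mem _ hx hy
    have hs2 : x - y ∈ Submodule.span (ZMod 2) (b \ s) := by
      apply hsupp
      intro i hi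
      simp [Pi.sub_apply, hxy i hi]
    have := Submodule.disjoint_def.mp hdisj _ hd hs2
    exact sub_eq_zero.mp this
  -- main computation
  set VF : Finset (Fin n → ZMod 2) := Finset.univ.filter (· ∈ V) with hVF
  have step1 : ∑ x : Fin n → ZMod 2, (if x ∈ V then pmass p x else 0)
      = ∑ x ∈ VF, pmass p x := by
    rw [hVF, Finset.sum_filter]
  rw [step1]
  have step2 : ∀ x, pmass p x = (∏ i ∈ Jᶜ, w (x i)) * ∏ i ∈ J, w (x i) := by
    intro x
    rw [pmass_eq_prod]
    rw [← Finset.prod_mul_prod_compl Jᶜ (fun i => w (x i)), compl_compl]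
  calc ∑ x ∈ VF, pmass p x
      = ∑ x ∈ VF, (∏ i ∈ Jᶜ, w (x i)) * ∏ i ∈ J, w (x i) := by
        exact Finset.sum_congr rfl fun x _ => step2 x
    _ ≤ ∑ x ∈ VF, (∏ i ∈ Jᶜ, w (x i)) * q ^ J.card := by
        apply Finset.sum_le_sum
        intro x _
        apply mul_le_mul_of_nonneg_left _ (Finset.prod_nonneg fun i _ => hw0 _)
        calc ∏ i ∈ J, w (x i) ≤ ∏ i ∈ J, q :=
              Finset.prod_le_prod (fun i _ => hw0 _) (fun i _ => hwle _)
          _ = q ^ J.card := Finset.prod_const q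
    _ = q ^ J.card * ∑ x ∈ VF, ∏ i ∈ Jᶜ, w (x i) := by
        rw [Finset.mul_sum]
        exact Finset.sum_congr rfl fun x _ => mul_comm _ _
    _ ≤ q ^ J.card * 1 := by
        apply mul_le_mul_of_nonneg_left _ (pow_nonneg hq0 _)
        set φ : (Fin n → ZMod 2) → ((Jᶜ : Finset (Fin n)) → ZMod 2) :=
          fun x i => x i with hφ
        have hinj2 : Set.InjOn φ VF := by
          intro x hx y hy hxy
          rw [hVF, Finset.coe_filter] at hx hy
          apply hinj x hx.2 y hy.2
          intro i hi
          have hic : i ∈ (Jᶜ : Finset (Fin n)) := Finset.mem_compl.mpr hi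
          exact congrFun hxy ⟨i, hic⟩
        have hrw : ∀ x : Fin n → ZMod 2,
            (∏ i ∈ Jᶜ, w (x i)) = ∏ i : (Jᶜ : Finset (Fin n)), w (φ x i) := by
          intro x
          rw [← Finset.prod_coe_sort]
        calc ∑ x ∈ VF, ∏ i ∈ Jᶜ, w (x i)
            = ∑ x ∈ VF, ∏ i : (Jᶜ : Finset (Fin n)), w (φ x i) :=
              Finset.sum_congr rfl fun x _ => hrw x
          _ = ∑ y ∈ VF.image φ, ∏ i : (Jᶜ : Finset (Fin n)), w (y i) :=
              by rw [Finset.sum_image (fun x hx y hy h => hinj2 hx hy h)]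
          _ ≤ ∑ y : (Jᶜ : Finset (Fin n)) → ZMod 2, ∏ i, w (y i) := by
              apply Finset.sum_le_sum_of_subset_of_nonneg (Finset.subset_univ _)
              intro y _ _
              exact Finset.prod_nonneg fun i _ => hw0 _
          _ = 1 := sum_prod_w p _
    _ = q ^ (n - Module.finrank (ZMod 2) V) := by rw [mul_one, hJcard]
theorem stmt8 {n k : ℕ} (p ε : ℝ) (hp0 : 0 < p) (hp1 : p < 1) (hε1 : ε < 1)
    (f : (Fin n → ZMod 2) → (Fin k → ZMod 2))
    (g : (Fin k → ZMod 2) →ₗ[ZMod 2] (Fin n → ZMod 2))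
    (herr : pmeas p {x | g (f x) ≠ x} ≤ ε) :
    (n : ℝ) - Real.log (1 - ε) / Real.log (max p (1 - p)) ≤ (k : ℝ) := by
  classical
  set q := max p (1 - p) with hqdef
  have hq0 : (0:ℝ) < q := lt_max_of_lt_left hp0
  have hq1 : q < 1 := max_lt hp1 (by linarith)
  have hlogq : Real.log q < 0 := Real.log_neg hq0 hq1
  have hpm_nonneg : ∀ x : Fin n → ZMod 2, 0 ≤ pmass p x := fun x =>
    mul_nonneg (pow_nonneg hp0.le _) (pow_nonneg (by linarith) _)
  have hε0 : (0:ℝ) ≤ ε := by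
    refine le_trans ?_ herr
    rw [pmeas]
    apply Finset.sum_nonneg
    intro x _
    by_cases h : x ∈ {x | g (f x) ≠ x} <;> simp [h, hpm_nonneg x]
  have htot : ∑ x : Fin n → ZMod 2, pmass p x = 1 := by
    rw [Finset.sum_congr rfl fun x _ => pmass_eq_prod p x]
    exact sum_prod_w p _
  have hsucc : 1 - ε ≤ pmeas p {x | g (f x) = x} := by
    have hsplit : pmeas p {x | g (f x) = x} + pmeas p {x | g (f x) ≠ x} = 1 := by
      rw [pmeas, pmeas, ← Finset.sum_add_distrib, ← htot]
      apply Finset.sum_congr rfl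
      intro x _
      by_cases h : g (f x) = x <;> simp [h]
    linarith
  set V : Submodule (ZMod 2) (Fin n → ZMod 2) := LinearMap.range g with hV
  have hsub : pmeas p {x | g (f x) = x}
      ≤ ∑ x : Fin n → ZMod 2, (if x ∈ V then pmass p x else 0) := by
    rw [pmeas]
    apply Finset.sum_le_sum
    intro x _
    by_cases h : g (f x) = x
    · have hx : x ∈ V := ⟨f x, h⟩
      simp [h, hx]
    · simp only [Set.mem_setOf_eq, h, if_false]
      by_cases hx : x ∈ V <;> simp [hx, hpm_nonneg x]
  set d := Module.finrank (ZMod 2) V with hd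
  have hdk : d ≤ k := by
    have h1 := LinearMap.finrank_range_le g
    rwa [Module.finrank_fin_fun] at h1
  have hdn : d ≤ n := by
    have h1 := Submodule.finrank_le V
    rwa [Module.finrank_fin_fun] at h1
  have hmain : 1 - ε ≤ q ^ (n - d) :=
    le_trans hsucc (le_trans hsub (key p hp0.le hp1.le V))
  have h1ε : (0:ℝ) < 1 - ε := by linarith
  have hlog : Real.log (1 - ε) ≤ ((n - d : ℕ) : ℝ) * Real.log q := by
    calc Real.log (1 - ε) ≤ Real.log (q ^ (n - d)) := Real.log_le_log h1ε hmain
      _ = ((n - d : ℕ) : ℝ) * Real.log q := Real.log_pow _ _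
  rw [Nat.cast_sub hdn] at hlog
  have hdiv : (n : ℝ) - d ≤ Real.log (1 - ε) / Real.log q := by
    rw [le_div_iff_of_neg hlogq]
    exact hlog
  have hdk' : (d : ℝ) ≤ (k : ℝ) := by exact_mod_cast hdk
  linarith
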